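/- Let 𝔅 be the block set of a 4-(23,7,1) design on the point set {1,…,23}, i.e., a family of 7-element subsets such that every 4-element subset of {1,…,23} lies in exactly one block (so |𝔅| = 253 and any two distinct blocks meet in 1 or 3 points). For each B ∈ 𝔅 let v_B ∈ H_24 be the point of ℝ^{25} whose i-th coordinate equals −3/10 for i ∈ {1} ∪ {2 + j : j ∈ B} and equals 1/5 otherwise, and let 𝔅' = {v_B : B ∈ 𝔅}. Then X = R_24 ∪ 𝔅' is a maximal 2-distance set in H_24 with exactly 278 points, whose two distances are √2 and √3: every pair of distinct points of X is at distance √2 or √3, both distances occur, and for every z ∈ H_24 with z ∉ X the set X ∪ {z} is not a 2-distance set. -/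

import Mathlib

noncomputable section

open scoped BigOperators Classical

/-- The set of Euclidean distances between distinct points of `X`. -/
def distSet {m : ℕ} (X : Set (EuclideanSpace ℝ (Fin m))) : Set ℝ :=
  {r | ∃ x ∈ X, ∃ y ∈ X, x ≠ y ∧ dist x y = r}

/-- `X` is a 2-distance set: exactly two distances occur between distinct points. -/
def IsTwoDistSet {m : ℕ} (X : Set (EuclideanSpace ℝ (Fin m))) : Prop :=
  (distSet X).ncard = 2

/-- The affine hyperplane `H_d = {x ∈ ℝ^{d+1} : ∑ x_i = 1}`. -/
def Hplane (d : ℕ) : Set (EuclideanSpace ℝ (Fin (d+1))) :=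
  {x | ∑ i, x i = 1}

/-- The regular simplex `R_d`: the standard basis vectors of `ℝ^{d+1}`. -/
def simplex (d : ℕ) : Set (EuclideanSpace ℝ (Fin (d+1))) :=
  Set.range (fun i => EuclideanSpace.single i (1:ℝ))

/-- The constant `c = (1 - (d+1-k)β)/(d+1)`. -/
def cval (d k : ℕ) (β : ℝ) : ℝ := (1 - ((d:ℝ) + 1 - (k:ℝ)) * β) / ((d:ℝ) + 1)

/-- The set `T_d(k,β)` of points of `H_d` all of whose coordinates lie in `{c, c+β}`,
with exactly `k` coordinates equal to `c`. -/
def Tset (d k : ℕ) (β : ℝ) : Set (EuclideanSpace ℝ (Fin (d+1))) :=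
  {x | x ∈ Hplane d ∧ (∀ i, x i = cval d k β ∨ x i = cval d k β + β) ∧
    {i | x i = cval d k β}.ncard = k}

/-- The point `v_B ∈ H_24 ⊆ ℝ^25` attached to a block `B ⊆ {1,…,23}`: its `i`-th
coordinate (1-indexed) is `-3/10` for `i ∈ {1} ∪ {2+j : j ∈ B}` and `1/5` otherwise.
Coordinates here are 0-indexed and a block element `j : Fin 23` stands for `j+1`. -/
def wittVec (B : Finset (Fin 23)) : EuclideanSpace ℝ (Fin (24+1)) :=
  WithLp.toLp 2 (fun i : Fin (24+1) => if (i : ℕ) = 0 ∨ ∃ j ∈ B, (i : ℕ) = (j : ℕ) + 2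
    then (-3/10 : ℝ) else 1/5)

section Comb
open Finset
-- counting subsets between T and U
lemma card_sandwich {α : Type*} [DecidableEq α] (T U : Finset α) (h : T ⊆ U) (q : ℕ)
    (hq : T.card ≤ q) :
    ((U.powersetCard q).filter (fun Q => T ⊆ Q)).card
      = (U.card - T.card).choose (q - T.card) := by
  rw [← Finset.card_sdiff_of_subset h, ← Finset.card_powersetCard]
  apply Finset.card_bij (fun Q _ => Q \ T)
  · intro Q hQ
    simp only [mem_filter, mem_powersetCard] at hQ
    simp only [mem_powersetCard]
    exact ⟨sdiff_subset_sdiff hQ.1.1 le_rfl, by rw [card_sdiff_of_subset hQ.2, hQ.1.2]⟩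
  · intro Q hQ Q' hQ' hE
    simp only [mem_filter, mem_powersetCard] at hQ hQ'
    have : Q \ T ∪ T = Q' \ T ∪ T := by rw [hE]
    rwa [sdiff_union_of_subset hQ.2, sdiff_union_of_subset hQ'.2] at this
  · intro R hR
    simp only [mem_powersetCard] at hR
    refine ⟨R ∪ T, ?_, ?_⟩
    · simp only [mem_filter, mem_powersetCard]
      have hd : Disjoint R T := disjoint_of_subset_left hR.1 sdiff_disjoint
      refine ⟨⟨union_subset (hR.1.trans (sdiff_subset)) h, ?_⟩, subset_union_right⟩
      rw [card_union_of_disjoint hd, hR.2]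
      omega
    · exact union_sdiff_cancel_right (disjoint_of_subset_left hR.1 sdiff_disjoint)

variable (𝔅 : Finset (Finset (Fin 23)))
    (hblock : ∀ B ∈ 𝔅, B.card = 7)
    (hdes : ∀ Q : Finset (Fin 23), Q.card = 4 →
      (𝔅.filter (fun B => Q ⊆ B)).card = 1)

include hblock hdes in
lemma lam_mul (T : Finset (Fin 23)) (ht : T.card ≤ 4) :
    (𝔅.filter (fun B => T ⊆ B)).card * (7 - T.card).choose (4 - T.card)
      = (23 - T.card).choose (4 - T.card) := by
  classical
  set A := ((Finset.univ : Finset (Fin 23)).powersetCard 4).filter (fun Q => T ⊆ Q) with hAdef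
  have hA : A.card = (23 - T.card).choose (4 - T.card) := by
    rw [hAdef, card_sandwich T Finset.univ (subset_univ T) 4 ht, card_univ]
    simp
  have h1 : ∑ Q ∈ A, (𝔅.filter (fun B => Q ⊆ B)).card = A.card := by
    rw [Finset.sum_congr rfl (fun Q hQ => ?_), Finset.sum_const, smul_eq_mul, mul_one]
    simp only [hAdef, mem_filter, mem_powersetCard] at hQ
    exact hdes Q hQ.1.2
  have h2 : ∑ Q ∈ A, (𝔅.filter (fun B => Q ⊆ B)).card
      = (𝔅.filter (fun B => T ⊆ B)).card * (7 - T.card).choose (4 - T.card) := by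
    simp only [Finset.card_filter]
    rw [Finset.sum_comm]
    have : ∀ B ∈ 𝔅, (∑ Q ∈ A, if Q ⊆ B then 1 else 0)
        = if T ⊆ B then (7 - T.card).choose (4 - T.card) else 0 := by
      intro B hB
      rw [← Finset.card_filter]
      have hfe : A.filter (fun Q => Q ⊆ B) = (B.powersetCard 4).filter (fun Q => T ⊆ Q) := by
        ext Q
        simp only [hAdef, mem_filter, mem_powersetCard, Finset.subset_univ, true_and,
          filter_filter]
        tauto

      rw [hfe]
      by_cases hTB : T ⊆ B
      · rw [if_pos hTB, card_sandwich T B hTB 4 ht, hblock B hB]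
      · rw [if_neg hTB, Finset.card_eq_zero]
        apply Finset.filter_eq_empty_iff.mpr
        intro Q hQ hTQ
        exact hTB (hTQ.trans (mem_powersetCard.mp hQ).1)
    rw [Finset.sum_congr rfl this, Finset.sum_ite, Finset.sum_const_zero, add_zero,
      Finset.sum_const, smul_eq_mul, Finset.sum_boole]
    simp [mul_comm]
  omega

include hblock hdes in
lemma lam_eq (T : Finset (Fin 23)) (ht : T.card ≤ 4) :
    (𝔅.filter (fun B => T ⊆ B)).card = [253,77,21,5,1].getD T.card 0 := by
  have h := lam_mul 𝔅 hblock hdes T ht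
  have h5 : T.card = 0 ∨ T.card = 1 ∨ T.card = 2 ∨ T.card = 3 ∨ T.card = 4 := by omega
  rcases h5 with hc | hc | hc | hc | hc <;>
    rw [hc] at h ⊢ <;> norm_num [Nat.choose] at h ⊢ <;> omega

include hblock hdes in
lemma inter_sum (C : Finset (Fin 23)) (t : ℕ) (ht : t ≤ 4) :
    ∑ B ∈ 𝔅, ((C ∩ B).card).choose t = C.card.choose t * [253,77,21,5,1].getD t 0 := by
  have key : ∀ B : Finset (Fin 23), ((C ∩ B).card).choose t
      = ((C.powersetCard t).filter (fun T => T ⊆ B)).card := by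
    intro B
    rw [← Finset.card_powersetCard]
    congr 1
    ext T
    simp only [mem_powersetCard, mem_filter, subset_inter_iff]
    tauto
  simp only [key, Finset.card_filter]
  rw [Finset.sum_comm]
  have h2 : ∀ T ∈ C.powersetCard t, (∑ B ∈ 𝔅, if T ⊆ B then 1 else 0)
      = [253,77,21,5,1].getD t 0 := by
    intro T hT
    have hTc : T.card = t := (mem_powersetCard.mp hT).2
    rw [← Finset.card_filter, lam_eq 𝔅 hblock hdes T (by omega), hTc]
  rw [Finset.sum_congr rfl h2, Finset.sum_const, smul_eq_mul, Finset.card_powersetCard]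

include hblock hdes in
lemma card_B : 𝔅.card = 253 := by
  have h := lam_eq 𝔅 hblock hdes ∅ (by simp)
  simpa using h


include hdes in
lemma inter_le (B D : Finset (Fin 23)) (hB : B ∈ 𝔅) (hD : D ∈ 𝔅) (hne : B ≠ D) :
    (B ∩ D).card ≤ 3 := by
  by_contra hlt
  obtain ⟨Q, hQsub, hQ4⟩ := Finset.exists_subset_card_eq (by omega : 4 ≤ (B ∩ D).card)
  have h1 := hdes Q hQ4
  have : 1 < (𝔅.filter (fun X => Q ⊆ X)).card := by
    apply Finset.one_lt_card.mpr
    refine ⟨B, ?_, D, ?_, hne⟩ <;> simp only [mem_filter]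
    · exact ⟨hB, hQsub.trans inter_subset_left⟩
    · exact ⟨hD, hQsub.trans inter_subset_right⟩
  omega

-- generic fiberwise decomposition over range 8
lemma sum_fiber8 (C : Finset (Fin 23)) (hC : ∀ B ∈ 𝔅, (C ∩ B).card < 8) (f : ℕ → ℕ) :
    ∑ B ∈ 𝔅, f ((C ∩ B).card)
      = ∑ i ∈ Finset.range 8, (𝔅.filter (fun B => (C ∩ B).card = i)).card * f i := by
  rw [← Finset.sum_fiberwise_of_maps_to (fun B hB => Finset.mem_range.mpr (hC B hB))
    (fun B => f ((C ∩ B).card))]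
  refine Finset.sum_congr rfl (fun i _ => ?_)
  rw [Finset.sum_congr rfl (fun B hB => by rw [(Finset.mem_filter.mp hB).2]),
    Finset.sum_const, smul_eq_mul]

include hblock hdes in
lemma quasi (B B' : Finset (Fin 23)) (hB : B ∈ 𝔅) (hB' : B' ∈ 𝔅) (hne : B ≠ B') :
    (B ∩ B').card = 1 ∨ (B ∩ B').card = 3 := by
  classical
  have hB7 := hblock B hB
  have hle : ∀ D ∈ 𝔅, (B ∩ D).card < 8 := by
    intro D hD
    have := Finset.card_le_card (inter_subset_left (s₁ := B) (s₂ := D))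
    omega
  set m : ℕ → ℕ := fun i => (𝔅.filter (fun D => (B ∩ D).card = i)).card with hm
  have key : ∀ t ≤ 4, ∑ i ∈ Finset.range 8, m i * i.choose t
      = (7:ℕ).choose t * [253,77,21,5,1].getD t 0 := by
    intro t ht
    rw [← sum_fiber8 𝔅 B hle (fun i => i.choose t), inter_sum 𝔅 hblock hdes B t ht, hB7]
  have hm7 : m 7 = 1 := by
    have : (𝔅.filter (fun D => (B ∩ D).card = 7)) = {B} := by
      ext D
      simp only [mem_filter, mem_singleton]
      constructor
      · rintro ⟨hD, hc⟩
        have hsub : B ⊆ D := by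
          have h1 : B ∩ D = B := Finset.eq_of_subset_of_card_le inter_subset_left (by omega)
          rw [← h1]; exact inter_subset_right
        exact ((Finset.eq_of_subset_of_card_le hsub (by rw [hblock D hD, hB7])).symm)
      · rintro rfl; simp [hB, hB7]
    simp only [hm, this, card_singleton]
  have hm456 : m 4 = 0 ∧ m 5 = 0 ∧ m 6 = 0 := by
    refine ⟨?_, ?_, ?_⟩ <;>
    · simp only [hm]
      rw [Finset.card_eq_zero, Finset.filter_eq_empty_iff]
      intro D hD hc
      rcases eq_or_ne B D with rfl | hne'
      · rw [Finset.inter_self] at hc; omega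
      · have := inter_le 𝔅 hdes B D hB hD hne'; omega
  have e0 := key 0 (by norm_num)
  have e1 := key 1 (by norm_num)
  have e2 := key 2 (by norm_num)
  have e3 := key 3 (by norm_num)
  simp [Finset.sum_range_succ, Nat.choose] at e0 e1 e2 e3
  -- B' lies in fiber i₀
  have hi0 : m ((B ∩ B').card) ≥ 1 := by
    simp only [hm]
    have hmem : B' ∈ 𝔅.filter (fun D => (B ∩ D).card = (B ∩ B').card) := by
      simp [mem_filter, hB']
    exact Nat.one_le_iff_ne_zero.mpr (Finset.card_ne_zero_of_mem hmem)
  have hle3 := inter_le 𝔅 hdes B B' hB hB' hne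
  have hcase : (B ∩ B').card = 0 ∨ (B ∩ B').card = 1 ∨ (B ∩ B').card = 2 ∨ (B ∩ B').card = 3 := by
    omega
  rcases hcase with hc | hc | hc | hc <;> rw [hc] at hi0 <;> omega


include hblock hdes in
lemma count_eq (C : Finset (Fin 23)) (p q : ℕ)
    (h : ∀ B ∈ 𝔅, (C ∩ B).card = p ∨ (C ∩ B).card = q) (t : ℕ) (ht : t ≤ 4) :
    (𝔅.filter (fun B => (C ∩ B).card = p)).card * p.choose t
      + (𝔅.filter (fun B => ¬((C ∩ B).card = p))).card * q.choose t
      = C.card.choose t * [253,77,21,5,1].getD t 0 := by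
  classical
  rw [← inter_sum 𝔅 hblock hdes C t ht,
    ← Finset.sum_filter_add_sum_filter_not 𝔅 (fun B => (C ∩ B).card = p)]
  congr 1
  · rw [Finset.sum_congr rfl (fun B hB => by rw [(mem_filter.mp hB).2]),
      Finset.sum_const, smul_eq_mul]
  · rw [Finset.sum_congr rfl (fun B hB => ?_), Finset.sum_const, smul_eq_mul]
    have h1 := mem_filter.mp hB
    have h2 := h B h1.1
    have h3 : (C ∩ B).card = q := by tauto
    rw [h3]

-- the 8 contradiction cases, packaged:
include hblock hdes in
lemma no_config (C : Finset (Fin 23)) (p q : ℕ)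
    (h : ∀ B ∈ 𝔅, (C ∩ B).card = p ∨ (C ∩ B).card = q)
    (hcase : (p = 2 ∧ q = 4 ∧ (C.card = 7 ∨ C.card = 8)) ∨
             (p = 1 ∧ q = 3 ∧ (C.card = 6 ∨ C.card = 7)) ∨
             (p = 4 ∧ q = 6 ∧ (C.card = 12 ∨ C.card = 13)) ∨
             (p = 3 ∧ q = 5 ∧ (C.card = 11 ∨ C.card = 12))) : False := by
  have e0 := count_eq 𝔅 hblock hdes C p q h 0 (by norm_num)
  have e1 := count_eq 𝔅 hblock hdes C p q h 1 (by norm_num)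
  have e2 := count_eq 𝔅 hblock hdes C p q h 2 (by norm_num)
  have e3 := count_eq 𝔅 hblock hdes C p q h 3 (by norm_num)
  obtain ⟨hp, hq, hC | hC⟩ | ⟨hp, hq, hC | hC⟩ | ⟨hp, hq, hC | hC⟩ | ⟨hp, hq, hC | hC⟩ :=
    hcase <;>
    rw [hp, hq, hC] at e0 e1 e2 e3 <;>
    simp [Nat.choose] at e0 e1 e2 e3 <;>
    omega

end Comb
section Geom
open Finset

def pat {n : ℕ} (P : Finset (Fin n)) (a b : ℝ) : EuclideanSpace ℝ (Fin n) :=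
  WithLp.toLp 2 (fun i => if i ∈ P then a else b)

lemma sum_ind {n : ℕ} (D : Finset (Fin n)) (c : ℝ) :
    ∑ i : Fin n, (if i ∈ D then c else 0) = D.card * c := by
  rw [Finset.sum_ite_mem, Finset.univ_inter, Finset.sum_const, nsmul_eq_mul]

lemma sum_two_const {n : ℕ} (D : Finset (Fin n)) (a b : ℝ) :
    ∑ i : Fin n, (if i ∈ D then a else b) = D.card * a + ((n:ℝ) - D.card) * b := by
  have h : ∀ i : Fin n, (if i ∈ D then a else b) = b + (if i ∈ D then a - b else 0) := by
    intro i; split <;> ring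
  rw [Finset.sum_congr rfl (fun i _ => h i), Finset.sum_add_distrib, sum_ind,
    Finset.sum_const, Finset.card_univ, Fintype.card_fin, nsmul_eq_mul]
  ring

lemma sum_pat {n : ℕ} (P : Finset (Fin n)) (a b : ℝ) :
    ∑ i, pat P a b i = P.card * a + ((n:ℝ) - P.card) * b := sum_two_const P a b

lemma dist_sq_pat {n : ℕ} (P Q : Finset (Fin n)) (a1 b1 a2 b2 : ℝ) :
    ∑ i, (pat P a1 b1 i - pat Q a2 b2 i)^2
      = (P ∩ Q).card * (a1-a2)^2 + ((P \ Q).card) * (a1-b2)^2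
        + ((Q \ P).card) * (b1-a2)^2 + ((n:ℝ) - (P ∪ Q).card) * (b1-b2)^2 := by
  have h : ∀ i : Fin n, (pat P a1 b1 i - pat Q a2 b2 i)^2
      = (if i ∈ P ∩ Q then (a1-a2)^2 else 0) + (if i ∈ P \ Q then (a1-b2)^2 else 0)
        + (if i ∈ Q \ P then (b1-a2)^2 else 0)
        + (if i ∈ P ∪ Q then (0:ℝ) else (b1-b2)^2) := by
    intro i
    simp only [pat, PiLp.toLp_apply, Finset.mem_inter, Finset.mem_sdiff, Finset.mem_union]
    by_cases hP : i ∈ P <;> by_cases hQ : i ∈ Q <;> simp [hP, hQ]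
  rw [Finset.sum_congr rfl (fun i _ => h i)]
  rw [Finset.sum_add_distrib, Finset.sum_add_distrib, Finset.sum_add_distrib,
    sum_ind, sum_ind, sum_ind]
  have h4 : ∀ i : Fin n, (if i ∈ P ∪ Q then (0:ℝ) else (b1-b2)^2)
      = (if i ∈ (P ∪ Q)ᶜ then (b1-b2)^2 else 0) := by
    intro i
    by_cases hP : i ∈ P <;> by_cases hQ : i ∈ Q <;> simp [hP, hQ]
  rw [Finset.sum_congr rfl (fun i _ => h4 i), sum_ind, Finset.card_compl, Fintype.card_fin]
  have hc : (((n - (P ∪ Q).card : ℕ)) : ℝ) = (n:ℝ) - (P ∪ Q).card := by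
    have h5 := Finset.card_le_univ (P ∪ Q)
    simp only [Finset.card_univ, Fintype.card_fin] at h5
    exact Nat.cast_sub h5
  rw [hc]

lemma dist_eq_sqrt {n : ℕ} (x y : EuclideanSpace ℝ (Fin n)) :
    dist x y = Real.sqrt (∑ i, (x i - y i)^2) := by
  rw [EuclideanSpace.dist_eq]
  congr 1
  exact Finset.sum_congr rfl fun i _ => by rw [Real.dist_eq, sq_abs]

def emb : Fin 23 ↪ Fin 25 :=
  ⟨fun j => ⟨(j:ℕ)+2, by omega⟩, show Function.Injective (fun j : Fin 23 => (⟨(j:ℕ)+2, by omega⟩ : Fin 25)) by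
    intro a b h
    simp only [Fin.mk.injEq, add_left_inj] at h
    exact Fin.ext h⟩

def LB (B : Finset (Fin 23)) : Finset (Fin 25) := insert 0 (B.map emb)


lemma zero_not_mem_map (B : Finset (Fin 23)) : (0 : Fin 25) ∉ B.map emb := by
  simp only [Finset.mem_map, emb, Function.Embedding.coeFn_mk]
  rintro ⟨j, -, hj⟩
  have := congrArg Fin.val hj
  simp at this

lemma mem_LB_iff (B : Finset (Fin 23)) (i : Fin 25) :
    i ∈ LB B ↔ ((i : ℕ) = 0 ∨ ∃ j ∈ B, (i : ℕ) = (j : ℕ) + 2) := by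
  simp only [LB, Finset.mem_insert, Finset.mem_map, emb, Function.Embedding.coeFn_mk]
  constructor
  · rintro (rfl | ⟨j, hj, rfl⟩)
    · exact Or.inl rfl
    · exact Or.inr ⟨j, hj, rfl⟩
  · rintro (h0 | ⟨j, hj, hij⟩)
    · exact Or.inl (Fin.ext h0)
    · exact Or.inr ⟨j, hj, (Fin.ext hij.symm : _)⟩

lemma wittVec_eq_pat (B : Finset (Fin 23)) : wittVec B = pat (LB B) (-3/10) (1/5) := by
  ext i
  simp only [wittVec, pat, PiLp.toLp_apply, ← mem_LB_iff]

lemma card_LB (B : Finset (Fin 23)) (hB : B.card = 7) : (LB B).card = 8 := by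
  rw [LB, Finset.card_insert_of_notMem (zero_not_mem_map B), Finset.card_map, hB]

lemma LB_inter (B B' : Finset (Fin 23)) : LB B ∩ LB B' = LB (B ∩ B') := by
  simp only [LB, Finset.map_inter]
  ext i
  simp only [Finset.mem_inter, Finset.mem_insert]
  tauto

lemma card_LB_inter (B B' : Finset (Fin 23)) :
    (LB B ∩ LB B').card = (B ∩ B').card + 1 := by
  rw [LB_inter, LB, Finset.card_insert_of_notMem (zero_not_mem_map _), Finset.card_map]

lemma single_eq_pat {n : ℕ} (i : Fin n) :
    EuclideanSpace.single i (1:ℝ) = pat {i} 1 0 := by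
  ext j
  rw [EuclideanSpace.single_apply]
  simp [pat, eq_comm]

end Geom
section Geom2
open Finset
lemma pat_sq_sum {n : ℕ} (P : Finset (Fin n)) (a b : ℝ) :
    ∑ i, (pat P a b i)^2 = P.card * a^2 + ((n:ℝ) - P.card) * b^2 := by
  have h : ∀ i : Fin n, (pat P a b i)^2 = pat P (a^2) (b^2) i := by
    intro i; simp only [pat, PiLp.toLp_apply]; split <;> ring
  rw [Finset.sum_congr rfl (fun i _ => h i), sum_pat]


lemma dist_sq_pat' {n : ℕ} (P Q : Finset (Fin n)) (a1 b1 a2 b2 : ℝ) :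
    ∑ i, (pat P a1 b1 i - pat Q a2 b2 i)^2
      = (P ∩ Q).card * (a1-a2)^2 + ((P.card:ℝ) - (P ∩ Q).card) * (a1-b2)^2
        + ((Q.card:ℝ) - (P ∩ Q).card) * (b1-a2)^2
        + ((n:ℝ) - P.card - Q.card + (P ∩ Q).card) * (b1-b2)^2 := by
  rw [dist_sq_pat]
  have h1 := Finset.card_inter_add_card_sdiff P Q
  have h2 := Finset.card_inter_add_card_sdiff Q P
  have h3 := Finset.card_union_add_card_inter P Q
  rw [Finset.inter_comm Q P] at h2
  have c1 : ((P \ Q).card : ℝ) = (P.card : ℝ) - (P ∩ Q).card := by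
    have := congrArg (Nat.cast (R := ℝ)) h1; push_cast at this; linarith
  have c2 : ((Q \ P).card : ℝ) = (Q.card : ℝ) - (P ∩ Q).card := by
    have := congrArg (Nat.cast (R := ℝ)) h2; push_cast at this; linarith
  have c3 : ((P ∪ Q).card : ℝ) = (P.card : ℝ) + Q.card - (P ∩ Q).card := by
    have := congrArg (Nat.cast (R := ℝ)) h3; push_cast at this; linarith
  rw [c1, c2, c3]; ring


lemma sq_dist_single {n : ℕ} (z : EuclideanSpace ℝ (Fin n)) (i : Fin n) :
    ∑ j, (z j - EuclideanSpace.single i 1 j)^2 = (∑ j, (z j)^2) + 1 - 2 * z i := by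
  have h : ∀ j : Fin n, (z j - EuclideanSpace.single i 1 j)^2
      = (z j)^2 - 2 * (z j * EuclideanSpace.single i 1 j)
        + (EuclideanSpace.single i 1 j)^2 := fun j => by ring
  rw [Finset.sum_congr rfl (fun j _ => h j), Finset.sum_add_distrib, Finset.sum_sub_distrib,
    ← Finset.mul_sum]
  have h1 : ∑ j, z j * EuclideanSpace.single i (1:ℝ) j = z i := by
    simp [EuclideanSpace.single_apply, mul_ite, Finset.sum_ite_eq']
  have h2 : ∑ j, (EuclideanSpace.single i (1:ℝ) j)^2 = 1 := by
    simp [EuclideanSpace.single_apply, ite_pow, Finset.sum_ite_eq']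
  rw [h1, h2]; ring

lemma S_inter_LB (S : Finset (Fin 25)) (B : Finset (Fin 23)) :
    (S ∩ LB B).card
      = ((Finset.univ.filter (fun j : Fin 23 => emb j ∈ S)) ∩ B).card
        + (if (0:Fin 25) ∈ S then 1 else 0) := by
  set C := Finset.univ.filter (fun j : Fin 23 => emb j ∈ S) with hC
  have hmap : S ∩ B.map emb = (C ∩ B).map emb := by
    ext i
    simp only [Finset.mem_inter, Finset.mem_map, hC, Finset.mem_filter, Finset.mem_univ,
      true_and]
    constructor
    · rintro ⟨hiS, j, hjB, rfl⟩; exact ⟨j, ⟨hiS, hjB⟩, rfl⟩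
    · rintro ⟨j, ⟨hjS, hjB⟩, rfl⟩; exact ⟨hjS, j, hjB, rfl⟩
  have h0map : (0:Fin 25) ∉ B.map emb := by
    simp only [Finset.mem_map, emb, Function.Embedding.coeFn_mk]
    rintro ⟨j, -, hj⟩
    have := congrArg Fin.val hj
    simp at this
  rw [LB]
  by_cases h0 : (0:Fin 25) ∈ S
  · rw [if_pos h0]
    have : S ∩ insert 0 (B.map emb) = insert 0 (S ∩ B.map emb) := by
      ext i
      simp only [Finset.mem_inter, Finset.mem_insert]
      constructor
      · rintro ⟨hiS, rfl | hi⟩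
        · exact Or.inl rfl
        · exact Or.inr ⟨hiS, hi⟩
      · rintro (rfl | ⟨hiS, hi⟩)
        · exact ⟨h0, Or.inl rfl⟩
        · exact ⟨hiS, Or.inr hi⟩
    rw [this, Finset.card_insert_of_notMem (fun hmem => h0map (Finset.mem_inter.mp hmem).2),
      hmap, Finset.card_map]
  · rw [if_neg h0]
    have : S ∩ insert 0 (B.map emb) = S ∩ B.map emb := by
      ext i
      simp only [Finset.mem_inter, Finset.mem_insert]
      constructor
      · rintro ⟨hiS, rfl | hi⟩
        · exact absurd hiS h0
        · exact ⟨hiS, hi⟩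
      · rintro ⟨hiS, hi⟩; exact ⟨hiS, Or.inr hi⟩
    rw [this, hmap, Finset.card_map, Nat.add_zero]


lemma S_card_split (S : Finset (Fin 25)) :
    S.card = ((Finset.univ.filter (fun j : Fin 23 => emb j ∈ S))).card
      + (if (0:Fin 25) ∈ S then 1 else 0) + (if (1:Fin 25) ∈ S then 1 else 0) := by
  set C := Finset.univ.filter (fun j : Fin 23 => emb j ∈ S) with hC
  have hsd : S \ {0, 1} = C.map emb := by
    ext i
    simp only [Finset.mem_sdiff, Finset.mem_insert, Finset.mem_singleton, Finset.mem_map,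
      hC, Finset.mem_filter, Finset.mem_univ, true_and]
    constructor
    · rintro ⟨hiS, hne⟩
      push_neg at hne
      have hv : 2 ≤ (i:ℕ) := by
        rcases hne with ⟨h0, h1⟩
        have : (i:ℕ) ≠ 0 := fun h => h0 (Fin.ext h)
        have : (i:ℕ) ≠ 1 := fun h => h1 (Fin.ext h)
        omega
      refine ⟨⟨(i:ℕ) - 2, by omega⟩, ?_, ?_⟩
      · have : emb ⟨(i:ℕ) - 2, by omega⟩ = i := by
          simp only [emb, Function.Embedding.coeFn_mk]
          exact Fin.ext (by simp; omega)
        rwa [this]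
      · simp only [emb, Function.Embedding.coeFn_mk]
        exact Fin.ext (by simp; omega)
    · rintro ⟨j, hjS, rfl⟩
      refine ⟨hjS, ?_⟩
      rintro (h | h) <;>
      · have := congrArg Fin.val h
        simp [emb] at this
  have hin : (S ∩ {0,1}).card = (if (0:Fin 25) ∈ S then 1 else 0)
      + (if (1:Fin 25) ∈ S then 1 else 0) := by
    by_cases h0 : (0:Fin 25) ∈ S <;> by_cases h1 : (1:Fin 25) ∈ S
    · have : S ∩ {0,1} = {0,1} := by
        ext i; simp only [Finset.mem_inter, Finset.mem_insert, Finset.mem_singleton]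
        constructor
        · tauto
        · rintro (rfl | rfl) <;> simp [h0, h1]
      rw [this, if_pos h0, if_pos h1]
      decide
    · have : S ∩ {0,1} = {0} := by
        ext i; simp only [Finset.mem_inter, Finset.mem_insert, Finset.mem_singleton]
        constructor
        · rintro ⟨hiS, rfl | rfl⟩
          · rfl
          · exact absurd hiS h1
        · rintro rfl; exact ⟨h0, Or.inl rfl⟩
      rw [this, if_pos h0, if_neg h1]
      decide
    · have : S ∩ {0,1} = {1} := by
        ext i; simp only [Finset.mem_inter, Finset.mem_insert, Finset.mem_singleton]
        constructor
        · rintro ⟨hiS, rfl | rfl⟩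
          · exact absurd hiS h0
          · rfl
        · rintro rfl; exact ⟨h1, Or.inr rfl⟩
      rw [this, if_neg h0, if_pos h1]
      decide
    · have : S ∩ {0,1} = ∅ := by
        ext i; simp only [Finset.mem_inter, Finset.mem_insert, Finset.mem_singleton,
          Finset.notMem_empty, iff_false, not_and]
        rintro hiS (rfl | rfl)
        · exact h0 hiS
        · exact h1 hiS
      rw [this, if_neg h0, if_neg h1]
      decide
  have := Finset.card_inter_add_card_sdiff S ({0,1} : Finset (Fin 25))
  rw [hsd, Finset.card_map] at this
  omega


lemma max_contra (𝔅 : Finset (Finset (Fin 23)))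
    (hblock : ∀ B ∈ 𝔅, B.card = 7)
    (hdes : ∀ Q : Finset (Fin 23), Q.card = 4 → (𝔅.filter (fun B => Q ⊆ B)).card = 1)
    (z : EuclideanSpace ℝ (Fin 25))
    (hz : ∑ i, z i = 1)
    (hd1 : ∀ i : Fin 25, (∑ j, (z j - EuclideanSpace.single i 1 j)^2) = 2 ∨
      (∑ j, (z j - EuclideanSpace.single i 1 j)^2) = 3)
    (hd2 : ∀ B ∈ 𝔅, (∑ j, (z j - wittVec B j)^2) = 2 ∨
      (∑ j, (z j - wittVec B j)^2) = 3) : False := by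
  classical
  set N := ∑ j, (z j)^2 with hN
  set c : ℝ := (N - 2)/2 with hcdef
  have hcoord : ∀ i, z i = c ∨ z i = c + 1/2 := by
    intro i
    have h := hd1 i
    rw [sq_dist_single z i, ← hN] at h
    rcases h with h | h
    · right; rw [hcdef]; linarith
    · left; rw [hcdef]; linarith
  set S : Finset (Fin 25) := Finset.univ.filter (fun i => z i = c) with hS
  set k := S.card with hk
  have hzpat : z = pat S c (c + 1/2) := by
    ext i
    simp only [pat, PiLp.toLp_apply]
    by_cases hi : i ∈ S
    · rw [if_pos hi]
      exact (Finset.mem_filter.mp hi).2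
    · rw [if_neg hi]
      rcases hcoord i with h | h
      · exact absurd (Finset.mem_filter.mpr ⟨Finset.mem_univ i, h⟩) hi
      · exact h
  have hsum : (k:ℝ) * c + (25 - (k:ℝ)) * (c + 1/2) = 1 := by
    rw [hzpat] at hz
    rw [sum_pat] at hz
    push_cast at hz ⊢
    linarith
  have hnorm : (k:ℝ) * c^2 + (25 - (k:ℝ)) * (c + 1/2)^2 = 2*c + 2 := by
    have h := pat_sq_sum S c (c + 1/2)
    rw [← hzpat, ← hN] at h
    have hN2 : N = 2*c + 2 := by rw [hcdef]; ring
    push_cast at h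
    linarith [h, hN2]
  have hcval : c = ((k:ℝ) - 23)/50 := by
    have h25 : 25*c + 25/2 - (k:ℝ)/2 = 1 := by linear_combination hsum
    linarith
  have hprod : ((k:ℝ) - 8) * ((k:ℝ) - 13) = 0 := by
    rw [hcval] at hnorm
    linear_combination (-100 : ℝ) * hnorm
  have hk813 : k = 8 ∨ k = 13 := by
    rcases mul_eq_zero.mp hprod with h | h
    · left
      have : (k:ℝ) = 8 := by linarith
      exact_mod_cast this
    · right
      have : (k:ℝ) = 13 := by linarith
      exact_mod_cast this
  set C : Finset (Fin 23) := Finset.univ.filter (fun j => emb j ∈ S) with hC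
  have hSL : ∀ B : Finset (Fin 23),
      (S ∩ LB B).card = (C ∩ B).card + (if (0:Fin 25) ∈ S then 1 else 0) :=
    fun B => S_inter_LB S B
  have hScard : k = C.card + (if (0:Fin 25) ∈ S then 1 else 0)
      + (if (1:Fin 25) ∈ S then 1 else 0) := S_card_split S
  rcases hk813 with hk8 | hk13
  · -- k = 8, c = -3/10
    have hc8 : c = -3/10 := by rw [hcval, hk8]; norm_num
    have ht : ∀ B ∈ 𝔅, (S ∩ LB B).card = 2 ∨ (S ∩ LB B).card = 4 := by
      intro B hB
      have hd := hd2 B hB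
      rw [hzpat, wittVec_eq_pat, dist_sq_pat', card_LB B (hblock B hB), ← hk, hk8, hc8] at hd
      have htle : (S ∩ LB B).card ≤ 8 := by
        calc (S ∩ LB B).card ≤ S.card := Finset.card_le_card Finset.inter_subset_left
        _ = 8 := hk8
      set t := (S ∩ LB B).card with hT
      norm_num at hd
      rcases hd with hd | hd
      · right
        have : (t:ℝ) = 4 := by linarith
        exact_mod_cast this
      · left
        have : (t:ℝ) = 2 := by linarith
        exact_mod_cast this
    by_cases h0 : (0:Fin 25) ∈ S
    · refine no_config 𝔅 hblock hdes C 1 3 ?_ (Or.inr (Or.inl ⟨rfl, rfl, ?_⟩))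
      · intro B hB
        have := ht B hB
        have hsl := hSL B
        rw [if_pos h0] at hsl
        omega
      · rw [if_pos h0] at hScard
        by_cases h1 : (1:Fin 25) ∈ S <;>
          [rw [if_pos h1] at hScard; rw [if_neg h1] at hScard] <;> omega
    · refine no_config 𝔅 hblock hdes C 2 4 ?_ (Or.inl ⟨rfl, rfl, ?_⟩)
      · intro B hB
        have := ht B hB
        have hsl := hSL B
        rw [if_neg h0] at hsl
        omega
      · rw [if_neg h0] at hScard
        by_cases h1 : (1:Fin 25) ∈ S <;>
          [rw [if_pos h1] at hScard; rw [if_neg h1] at hScard] <;> omega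
  · -- k = 13, c = -1/5
    have hc13 : c = -1/5 := by rw [hcval, hk13]; norm_num
    have ht : ∀ B ∈ 𝔅, (S ∩ LB B).card = 4 ∨ (S ∩ LB B).card = 6 := by
      intro B hB
      have hd := hd2 B hB
      rw [hzpat, wittVec_eq_pat, dist_sq_pat', card_LB B (hblock B hB), ← hk, hk13, hc13] at hd
      have htle : (S ∩ LB B).card ≤ 8 := by
        calc (S ∩ LB B).card ≤ (LB B).card := Finset.card_le_card Finset.inter_subset_right
        _ = 8 := card_LB B (hblock B hB)
      set t := (S ∩ LB B).card with hT
      norm_num at hd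
      rcases hd with hd | hd
      · right
        have : (t:ℝ) = 6 := by linarith
        exact_mod_cast this
      · left
        have : (t:ℝ) = 4 := by linarith
        exact_mod_cast this
    by_cases h0 : (0:Fin 25) ∈ S
    · refine no_config 𝔅 hblock hdes C 3 5 ?_ (Or.inr (Or.inr (Or.inr ⟨rfl, rfl, ?_⟩)))
      · intro B hB
        have := ht B hB
        have hsl := hSL B
        rw [if_pos h0] at hsl
        omega
      · rw [if_pos h0] at hScard
        by_cases h1 : (1:Fin 25) ∈ S <;>
          [rw [if_pos h1] at hScard; rw [if_neg h1] at hScard] <;> omega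
    · refine no_config 𝔅 hblock hdes C 4 6 ?_ (Or.inr (Or.inr (Or.inl ⟨rfl, rfl, ?_⟩)))
      · intro B hB
        have := ht B hB
        have hsl := hSL B
        rw [if_neg h0] at hsl
        omega
      · rw [if_neg h0] at hScard
        by_cases h1 : (1:Fin 25) ∈ S <;>
          [rw [if_pos h1] at hScard; rw [if_neg h1] at hScard] <;> omega

end Geom2
section Geom3
open Finset

lemma sq_sum_comm {n : ℕ} (x y : EuclideanSpace ℝ (Fin n)) :
    ∑ i, (x i - y i)^2 = ∑ i, (y i - x i)^2 :=
  Finset.sum_congr rfl (fun i _ => by ring)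

lemma dist_of_sq_eq {n : ℕ} (x y : EuclideanSpace ℝ (Fin n)) (v : ℝ)
    (h : ∑ i, (x i - y i)^2 = v) : dist x y = Real.sqrt v := by
  rw [dist_eq_sqrt, h]

lemma sq_of_dist_eq {n : ℕ} (x y : EuclideanSpace ℝ (Fin n)) (v : ℝ) (hv : 0 ≤ v)
    (h : dist x y = Real.sqrt v) : ∑ i, (x i - y i)^2 = v := by
  rw [dist_eq_sqrt] at h
  have hnn : 0 ≤ ∑ i, (x i - y i)^2 := Finset.sum_nonneg (fun i _ => sq_nonneg _)
  calc ∑ i, (x i - y i)^2 = (Real.sqrt (∑ i, (x i - y i)^2))^2 := (Real.sq_sqrt hnn).symm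
  _ = (Real.sqrt v)^2 := by rw [h]
  _ = v := Real.sq_sqrt hv

lemma sq_dist_ss (i j : Fin 25) (h : i ≠ j) :
    ∑ l, (EuclideanSpace.single i (1:ℝ) l - EuclideanSpace.single j 1 l)^2 = 2 := by
  rw [single_eq_pat, single_eq_pat, dist_sq_pat']
  have h0 : ({i} ∩ {j} : Finset (Fin 25)).card = 0 := by
    rw [Finset.singleton_inter_of_notMem (by simpa using h)]
    exact Finset.card_empty
  rw [h0]
  norm_num

lemma sq_dist_sw (i : Fin 25) (B : Finset (Fin 23)) (hB7 : B.card = 7) :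
    ∑ l, (EuclideanSpace.single i (1:ℝ) l - wittVec B l)^2
      = if i ∈ LB B then 3 else 2 := by
  rw [single_eq_pat, wittVec_eq_pat, dist_sq_pat', card_LB B hB7]
  by_cases hi : i ∈ LB B
  · have h1 : ({i} ∩ LB B).card = 1 := by
      rw [Finset.singleton_inter_of_mem hi, Finset.card_singleton]
    rw [h1, if_pos hi]
    norm_num
  · have h1 : ({i} ∩ LB B).card = 0 := by
      rw [Finset.singleton_inter_of_notMem hi, Finset.card_empty]
    rw [h1, if_neg hi]
    norm_num

lemma sq_dist_ww (B B' : Finset (Fin 23)) (hB7 : B.card = 7) (hB'7 : B'.card = 7) :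
    ∑ l, (wittVec B l - wittVec B' l)^2 = (7 - ((B ∩ B').card : ℝ))/2 := by
  rw [wittVec_eq_pat, wittVec_eq_pat, dist_sq_pat', card_LB B hB7, card_LB B' hB'7,
    card_LB_inter]
  push_cast
  ring

lemma emb_mem_LB (j : Fin 23) (B : Finset (Fin 23)) : emb j ∈ LB B ↔ j ∈ B := by
  rw [mem_LB_iff]
  simp only [emb, Function.Embedding.coeFn_mk]
  constructor
  · rintro (h0 | ⟨j', hj', hjj'⟩)
    · simp at h0
    · simp only [add_left_inj] at hjj'
      rwa [show j = j' from Fin.ext hjj']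
  · intro hj
    exact Or.inr ⟨j, hj, rfl⟩

lemma wittVec_injective : Function.Injective wittVec := by
  intro B B' h
  ext j
  have hj := congrFun (congrArg WithLp.ofLp h) (emb j)
  rw [wittVec_eq_pat, wittVec_eq_pat] at hj
  simp only [pat, PiLp.toLp_apply] at hj
  constructor <;> intro hm
  · by_contra hm'
    rw [if_pos ((emb_mem_LB j B).mpr hm),
      if_neg (fun hh => hm' ((emb_mem_LB j B').mp hh))] at hj
    norm_num at hj
  · by_contra hm'
    rw [if_neg (fun hh => hm' ((emb_mem_LB j B).mp hh)),
      if_pos ((emb_mem_LB j B').mpr hm)] at hj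
    norm_num at hj

lemma single_ne_witt (i : Fin 25) (B : Finset (Fin 23)) :
    EuclideanSpace.single i (1:ℝ) ≠ wittVec B := by
  intro h
  have hi := congrFun (congrArg WithLp.ofLp h) i
  rw [EuclideanSpace.single_apply, if_pos rfl, wittVec_eq_pat] at hi
  simp only [pat, PiLp.toLp_apply] at hi
  split at hi <;> norm_num at hi

lemma single_injective : Function.Injective (fun i : Fin 25 => EuclideanSpace.single i (1:ℝ)) := by
  intro i j h
  have hi := congrFun (congrArg WithLp.ofLp h) i
  simp only at hi
  rw [EuclideanSpace.single_apply, if_pos rfl, EuclideanSpace.single_apply] at hi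
  by_contra hne
  rw [if_neg (fun hh => hne hh)] at hi
  norm_num at hi

lemma distSet_mono {m : ℕ} {X Y : Set (EuclideanSpace ℝ (Fin m))} (h : X ⊆ Y) :
    distSet X ⊆ distSet Y := by
  rintro r ⟨x, hx, y, hy, hne, rfl⟩
  exact ⟨x, h hx, y, h hy, hne, rfl⟩

end Geom3

theorem stmt19 (𝔅 : Finset (Finset (Fin 23)))
    (hblock : ∀ B ∈ 𝔅, B.card = 7)
    (hdes : ∀ Q : Finset (Fin 23), Q.card = 4 →
      (𝔅.filter (fun B => Q ⊆ B)).card = 1) :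
    (simplex 24 ∪ wittVec '' ↑𝔅) ⊆ Hplane 24 ∧
    (simplex 24 ∪ wittVec '' ↑𝔅).ncard = 278 ∧
    distSet (simplex 24 ∪ wittVec '' ↑𝔅) = {Real.sqrt 2, Real.sqrt 3} ∧
    ∀ z ∈ Hplane 24, z ∉ (simplex 24 ∪ wittVec '' ↑𝔅) →
      ¬ IsTwoDistSet ((simplex 24 ∪ wittVec '' ↑𝔅) ∪ {z}) := by
  classical
  set X := simplex 24 ∪ wittVec '' ↑𝔅 with hX
  have hXmem : ∀ x ∈ X, (∃ i : Fin 25, x = EuclideanSpace.single i 1) ∨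
      (∃ B ∈ 𝔅, x = wittVec B) := by
    intro x hx
    rcases hx with hx | hx
    · obtain ⟨i, hi⟩ := hx; exact Or.inl ⟨i, hi.symm⟩
    · obtain ⟨B, hB, hBx⟩ := hx; exact Or.inr ⟨B, hB, hBx.symm⟩
  have hH : X ⊆ Hplane 24 := by
    intro x hx
    rcases hXmem x hx with ⟨i, rfl⟩ | ⟨B, hB, rfl⟩
    · show ∑ l, _ = 1
      rw [single_eq_pat, sum_pat]
      norm_num
    · show ∑ l, _ = 1
      rw [wittVec_eq_pat, sum_pat, card_LB B (hblock B hB)]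
      norm_num
  have hsq : ∀ x ∈ X, ∀ y ∈ X, x ≠ y →
      (∑ l, (x l - y l)^2 = 2 ∨ ∑ l, (x l - y l)^2 = 3) := by
    intro x hx y hy hne
    rcases hXmem x hx with ⟨i, rfl⟩ | ⟨B, hB, rfl⟩ <;>
      rcases hXmem y hy with ⟨j, rfl⟩ | ⟨B', hB', rfl⟩
    · left
      exact sq_dist_ss i j (fun hij => hne (by rw [hij]))
    · rw [sq_dist_sw i B' (hblock B' hB')]
      by_cases hi : i ∈ LB B'
      · right; rw [if_pos hi]
      · left; rw [if_neg hi]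
    · rw [sq_sum_comm, sq_dist_sw j B (hblock B hB)]
      by_cases hi : j ∈ LB B
      · right; rw [if_pos hi]
      · left; rw [if_neg hi]
    · have hBB' : B ≠ B' := fun h => hne (by rw [h])
      rw [sq_dist_ww B B' (hblock B hB) (hblock B' hB')]
      rcases quasi 𝔅 hblock hdes B B' hB hB' hBB' with hm | hm <;> rw [hm] <;>
        [right; left] <;> norm_num
  have hBne : ∃ B0, B0 ∈ 𝔅 := by
    have h4 : ({0,1,2,3} : Finset (Fin 23)).card = 4 := by decide
    obtain ⟨B0, hB0⟩ := Finset.card_eq_one.mp (hdes _ h4)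
    exact ⟨B0, (Finset.mem_filter.mp (hB0 ▸ Finset.mem_singleton_self B0)).1⟩
  have hd23 : distSet X = {Real.sqrt 2, Real.sqrt 3} := by
    ext r
    simp only [Set.mem_insert_iff, Set.mem_singleton_iff]
    constructor
    · rintro ⟨x, hx, y, hy, hne, rfl⟩
      rcases hsq x hx y hy hne with h | h
      · left; exact dist_of_sq_eq x y 2 h
      · right; exact dist_of_sq_eq x y 3 h
    · rintro (rfl | rfl)
      · refine ⟨EuclideanSpace.single 0 1, Or.inl ⟨0, rfl⟩,
          EuclideanSpace.single 1 1, Or.inl ⟨1, rfl⟩, ?_, ?_⟩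
        · intro h; exact absurd (single_injective h) (by decide)
        · exact dist_of_sq_eq _ _ 2 (sq_dist_ss 0 1 (by decide))
      · obtain ⟨B0, hB0⟩ := hBne
        refine ⟨EuclideanSpace.single 0 1, Or.inl ⟨0, rfl⟩, wittVec B0,
          Or.inr ⟨B0, by simpa using hB0, rfl⟩, single_ne_witt 0 B0, ?_⟩
        apply dist_of_sq_eq
        rw [sq_dist_sw 0 B0 (hblock B0 hB0), if_pos (show (0:Fin 25) ∈ LB B0 from Finset.mem_insert_self 0 _)]
  have hcard : X.ncard = 278 := by
    have hdisj : Disjoint (simplex 24) (wittVec '' ↑𝔅) := by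
      rw [Set.disjoint_left]
      rintro x ⟨i, rfl⟩ hximg
      obtain ⟨B, hB, hBx⟩ := hximg
      exact single_ne_witt i B hBx.symm
    rw [hX, Set.ncard_union_eq hdisj (Set.finite_range _) ((𝔅.finite_toSet).image _)]
    have h1 : (simplex 24).ncard = 25 := by
      rw [simplex, ← Nat.card_coe_set_eq, Nat.card_range_of_injective single_injective]
      simp
    have h2 : (wittVec '' ↑𝔅).ncard = 253 := by
      rw [Set.ncard_image_of_injective _ wittVec_injective, Set.ncard_coe_finset,
        card_B 𝔅 hblock hdes]
    rw [h1, h2]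
  refine ⟨hH, hcard, hd23, ?_⟩
  intro z hzH hzX htwo
  have htwo' : (distSet (X ∪ {z})).ncard = 2 := htwo
  have hne23 : Real.sqrt 2 ≠ Real.sqrt 3 := by
    rw [ne_eq, Real.sqrt_inj (by norm_num) (by norm_num)]
    norm_num
  have hDeq : ({Real.sqrt 2, Real.sqrt 3} : Set ℝ) = distSet (X ∪ {z}) := by
    apply Set.eq_of_subset_of_ncard_le
    · rw [← hd23]; exact distSet_mono Set.subset_union_left
    · rw [htwo', Set.ncard_pair hne23]
    · exact Set.finite_of_ncard_ne_zero (by omega)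
  have hzd : ∀ x ∈ X, ∑ l, (z l - x l)^2 = 2 ∨ ∑ l, (z l - x l)^2 = 3 := by
    intro x hx
    have hne : z ≠ x := fun h => hzX (h ▸ hx)
    have hmem : dist z x ∈ distSet (X ∪ {z}) :=
      ⟨z, Or.inr rfl, x, Or.inl hx, hne, rfl⟩
    rw [← hDeq] at hmem
    simp only [Set.mem_insert_iff, Set.mem_singleton_iff] at hmem
    rcases hmem with h | h
    · left; exact sq_of_dist_eq z x 2 (by norm_num) h
    · right; exact sq_of_dist_eq z x 3 (by norm_num) h
  exact max_contra 𝔅 hblock hdes z hzH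
    (fun i => hzd _ (Or.inl ⟨i, rfl⟩))
    (fun B hB => hzd _ (Or.inr ⟨B, by simpa using hB, rfl⟩))
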